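/- Let C ⊆ F_q^N be a linear code of dimension k, and m ≥ 1. Then Σ_{r=0}^{N-k} [m]_r W^{(r)}_{C^⊥}(X,Y) = (1/q^{km}) · Σ_{r=0}^{k} [m]_r W^{(r)}_C(X + (q^m - 1)Y, X - Y), where [m]_r = ∏_{i=0}^{r-1}(q^m - q^i). -/

import Mathlib

open Finset
open scoped Classical BigOperators

variable {Fq : Type} [Field Fq] [Fintype Fq]

noncomputable def wt {N : ℕ} (c : Fin N → Fq) : ℕ := (Finset.univ.filter fun j => c j ≠ 0).card

def dualCode {N : ℕ} (C : Submodule Fq (Fin N → Fq)) : Submodule Fq (Fin N → Fq) where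
  carrier := {v | ∀ u ∈ C, ∑ j, u j * v j = 0}
  add_mem' := by
    intro a b ha hb u hu
    have h1 := ha u hu
    have h2 := hb u hu
    have : ∀ j, u j * (a + b) j = u j * a j + u j * b j := fun j => by
      simp [Pi.add_apply, mul_add]
    simp only [Set.mem_setOf_eq, this, Finset.sum_add_distrib, h1, h2, add_zero]
  zero_mem' := by intro u hu; simp
  smul_mem' := by
    intro r v hv u hu
    have h := hv u hu
    have : ∀ j, u j * (r • v) j = r * (u j * v j) := fun j => by
      simp [Pi.smul_apply, smul_eq_mul]; ring
    simp only [Set.mem_setOf_eq, this, ← Finset.mul_sum, h, mul_zero]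

noncomputable def W {N : ℕ} (C : Submodule Fq (Fin N → Fq)) (X Y : ℂ) : ℂ :=
  ∑ c : C, X ^ (N - wt (c : Fin N → Fq)) * Y ^ wt (c : Fin N → Fq)

noncomputable def effLen {N m : ℕ} (c : Fin m → Fin N → Fq) : ℕ :=
  (Finset.univ.filter fun j => ∃ i, c i j ≠ 0).card

noncomputable def Wm {N m : ℕ} (Cs : Fin m → Submodule Fq (Fin N → Fq)) (X Y : ℂ) : ℂ :=
  ∑ c : (Π i, Cs i), X ^ (N - effLen fun i => (c i : Fin N → Fq)) *
    Y ^ effLen (fun i => (c i : Fin N → Fq))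

noncomputable def suppWt {N : ℕ} (V : Submodule Fq (Fin N → Fq)) : ℕ :=
  (Finset.univ.filter fun j => ∃ v ∈ V, v j ≠ 0).card

noncomputable def Wr {N : ℕ} (C : Submodule Fq (Fin N → Fq)) (r : ℕ) (X Y : ℂ) : ℂ :=
  ∑ᶠ D ∈ {D : Submodule Fq (Fin N → Fq) | D ≤ C ∧ Module.finrank Fq D = r},
    X ^ (N - suppWt D) * Y ^ suppWt D

section CharLemmas
variable {Fq : Type} [Field Fq] [Fintype Fq]

lemma addChar_sum {ι : Type*} (ψ : AddChar Fq ℂ) (s : Finset ι) (f : ι → Fq) :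
    ψ (∑ i ∈ s, f i) = ∏ i ∈ s, ψ (f i) := by
  classical
  induction s using Finset.induction_on with
  | empty => simp
  | insert _ _ h ih => rw [Finset.sum_insert h, Finset.prod_insert h, AddChar.map_add_eq_mul, ih]

lemma char1 {ψ : AddChar Fq ℂ} (hψ : ψ ≠ 1) {s : Fq} (hs : s ≠ 0) :
    ∑ t : Fq, ψ (s * t) = 0 := by
  obtain ⟨y, hy⟩ := AddChar.ne_one_iff.mp hψ
  have hne : ψ.mulShift s ≠ 1 := by
    rw [AddChar.ne_one_iff]
    exact ⟨s⁻¹ * y, by rwa [AddChar.mulShift_apply, mul_inv_cancel_left₀ hs]⟩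
  have := AddChar.sum_eq_zero_of_ne_one hne
  simpa [AddChar.mulShift_apply] using this

lemma char2 {m : ℕ} {ψ : AddChar Fq ℂ} (hψ : ψ ≠ 1) (b : Fin m → Fq) :
    ∑ a : Fin m → Fq, ψ (∑ i, b i * a i)
      = if b = 0 then ((Fintype.card Fq : ℂ)) ^ m else 0 := by
  classical
  by_cases hb : b = 0
  · simp only [hb, if_pos, Pi.zero_apply, zero_mul, Finset.sum_const_zero,
      AddChar.map_zero_eq_one, Finset.sum_const, Finset.card_univ, nsmul_eq_mul, mul_one]
    rw [Fintype.card_fun, Fintype.card_fin]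
    push_cast
    ring
  · rw [if_neg hb]
    have h1 : ∀ a : Fin m → Fq, ψ (∑ i, b i * a i) = ∏ i, ψ (b i * a i) := fun a =>
      addChar_sum ψ _ _
    simp only [h1]
    have h2 : ∑ a : Fin m → Fq, ∏ i, ψ (b i * a i) = ∏ i, ∑ t : Fq, ψ (b i * t) := by
      rw [Finset.prod_univ_sum]
      rw [Fintype.piFinset_univ]
    rw [h2]
    obtain ⟨i0, hi0⟩ := Function.ne_iff.mp hb
    exact Finset.prod_eq_zero (Finset.mem_univ i0) (char1 hψ hi0)

lemma mem_dualCode {N : ℕ} {C : Submodule Fq (Fin N → Fq)} {v : Fin N → Fq} :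
    v ∈ dualCode C ↔ ∀ u ∈ C, ∑ j, u j * v j = 0 := Iff.rfl

lemma char3 {ψ : AddChar Fq ℂ} (hψ : ψ ≠ 1) {N : ℕ} (E : Submodule Fq (Fin N → Fq))
    (v : Fin N → Fq) :
    ∑ u : E, ψ (∑ j, (u : Fin N → Fq) j * v j)
      = if v ∈ dualCode E then (Fintype.card E : ℂ) else 0 := by
  classical
  by_cases hv : v ∈ dualCode E
  · rw [if_pos hv]
    have : ∀ u : E, ψ (∑ j, (u : Fin N → Fq) j * v j) = 1 := fun u => by
      rw [hv (u : Fin N → Fq) u.2, AddChar.map_zero_eq_one]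
    simp [this]
  · rw [if_neg hv]
    rw [mem_dualCode] at hv
    push_neg at hv
    obtain ⟨u0, hu0, hs⟩ := hv
    obtain ⟨y, hy⟩ := AddChar.ne_one_iff.mp hψ
    set s : Fq := ∑ j, u0 j * v j with hsdef
    set w : E := ⟨(y * s⁻¹) • u0, E.smul_mem _ hu0⟩ with hw
    have hwv : ∑ j, (w : Fin N → Fq) j * v j = y := by
      simp only [hw, Pi.smul_apply, smul_eq_mul, mul_assoc, ← Finset.mul_sum]
      rw [← hsdef, inv_mul_cancel₀ hs, mul_one]
    have hshift : ∑ u : E, ψ (∑ j, ((u + w : E) : Fin N → Fq) j * v j)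
        = ∑ u : E, ψ (∑ j, (u : Fin N → Fq) j * v j) :=
      Fintype.sum_bijective (Equiv.addRight w) (Equiv.addRight w).bijective _ _ (fun u => rfl)
    have hexp : ∀ u : E, ψ (∑ j, ((u + w : E) : Fin N → Fq) j * v j)
        = ψ y * ψ (∑ j, (u : Fin N → Fq) j * v j) := by
      intro u
      have : (∑ j, ((u + w : E) : Fin N → Fq) j * v j)
          = (∑ j, (u : Fin N → Fq) j * v j) + (∑ j, (w : Fin N → Fq) j * v j) := by
        rw [← Finset.sum_add_distrib]
        exact Finset.sum_congr rfl fun j _ => by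
          show ((u : Fin N → Fq) j + (w : Fin N → Fq) j) * v j = _
          ring
      rw [this, AddChar.map_add_eq_mul, hwv, mul_comm]
    rw [Finset.sum_congr rfl fun u _ => hexp u, ← Finset.mul_sum] at hshift
    exact eq_zero_of_mul_eq_self_left hy hshift

end CharLemmas
section Counting
variable {Fq : Type} [Field Fq] [Fintype Fq]

open Module

lemma injective_constr_iff {M M' : Type*} [AddCommGroup M] [Module Fq M]
    [AddCommGroup M'] [Module Fq M'] {n : ℕ} (b : Basis (Fin n) Fq M) (s : Fin n → M') :
    Function.Injective (b.constr (M' := M') ℕ s) ↔ LinearIndependent Fq s := by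
  constructor
  · intro h
    have h2 := b.linearIndependent.map' (b.constr (M' := M') ℕ s) (LinearMap.ker_eq_bot.mpr h)
    have : (b.constr (M' := M') ℕ s) ∘ b = s := funext fun i => b.constr_basis ℕ s i
    rwa [this] at h2
  · intro li
    rw [← LinearMap.ker_eq_bot, LinearMap.ker_eq_bot']
    intro x hx
    have hrep := b.sum_repr x
    have : (b.constr (M' := M') ℕ s) x = ∑ i, b.repr x i • s i := by
      rw [← hrep, map_sum]
      simp only [map_smul, b.constr_basis]
      rw [← hrep]
      simp [Finsupp.smul_apply]
    rw [hx] at this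
    have hz := Fintype.linearIndependent_iff.mp li (fun i => b.repr x i) this.symm
    rw [← hrep]
    simp [hz]

lemma count_surj {N m : ℕ} (D : Submodule Fq (Fin N → Fq)) :
    (Nat.card {c : Fin m → (Fin N → Fq) // Submodule.span Fq (Set.range c) = D} : ℂ)
      = ∏ i ∈ Finset.range (Module.finrank Fq D),
          ((Fintype.card Fq : ℂ) ^ m - (Fintype.card Fq : ℂ) ^ i) := by
  classical
  set q := Fintype.card Fq
  set r := Module.finrank Fq D with hr
  rcases le_or_gt r m with hrm | hrm
  · -- equiv chain
    set U := Fin m → Fq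
    let bU : Basis (Fin m) Fq U := Pi.basisFun Fq (Fin m)
    -- E1
    let e1 : {c : Fin m → (Fin N → Fq) // Submodule.span Fq (Set.range c) = D}
        ≃ {φ : U →ₗ[Fq] (Fin N → Fq) // LinearMap.range φ = D} :=
      (Equiv.subtypeEquiv (bU.constr (M' := Fin N → Fq) ℕ).toEquiv
        (fun c => by rw [LinearEquiv.coe_toEquiv, Basis.constr_range]))
    -- E2
    let e2 : {φ : U →ₗ[Fq] (Fin N → Fq) // LinearMap.range φ = D}
        ≃ {φ : U →ₗ[Fq] D // Function.Surjective φ} :=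
      { toFun := fun φ => ⟨LinearMap.codRestrict D φ.1
          (fun x => (le_of_eq φ.2) (LinearMap.mem_range_self φ.1 x)), by
            rintro ⟨y, hy⟩
            rw [← φ.2] at hy
            obtain ⟨x, hx⟩ := hy
            exact ⟨x, Subtype.ext hx⟩⟩
        invFun := fun φ => ⟨D.subtype ∘ₗ φ.1, by
          rw [LinearMap.range_comp, LinearMap.range_eq_top.mpr φ.2, Submodule.map_subtype_top]⟩
        left_inv := fun φ => Subtype.ext (by ext x; rfl)
        right_inv := fun φ => Subtype.ext (by ext x; rfl) }
    -- E3
    let e3 : {φ : U →ₗ[Fq] D // Function.Surjective φ}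
        ≃ {ψ : Dual Fq D →ₗ[Fq] Dual Fq U // Function.Injective ψ} :=
      { toFun := fun f => ⟨f.1.dualMap, LinearMap.dualMap_injective_iff.mpr f.2⟩
        invFun := fun g => ⟨(Module.evalEquiv Fq D).symm.toLinearMap ∘ₗ g.1.dualMap ∘ₗ
            (Module.evalEquiv Fq U).toLinearMap, by
          intro y
          obtain ⟨z, hz⟩ := LinearMap.dualMap_surjective_of_injective g.2
            (Module.evalEquiv Fq D y)
          obtain ⟨x, hx⟩ := (Module.evalEquiv Fq U).surjective z
          refine ⟨x, ?_⟩
          simp only [LinearMap.coe_comp, LinearEquiv.coe_coe, Function.comp_apply]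
          rw [hx, hz, LinearEquiv.symm_apply_apply]⟩
        left_inv := fun f => Subtype.ext (by
          refine LinearMap.ext fun x => ?_
          simp only [LinearMap.coe_comp, Function.comp_apply, LinearEquiv.coe_coe]
          rw [LinearEquiv.symm_apply_eq]
          refine LinearMap.ext fun g => ?_
          simp [LinearMap.dualMap_apply])
        right_inv := fun g => Subtype.ext (by
          refine LinearMap.ext fun φ => ?_
          refine LinearMap.ext fun x => ?_
          simp [LinearMap.dualMap_apply, Module.apply_evalEquiv_symm_apply]) }
    -- E4
    have hdr : Module.finrank Fq (Dual Fq D) = r := by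
      rw [Subspace.dual_finrank_eq]
    let bD : Basis (Fin (Module.finrank Fq (Dual Fq D))) Fq (Dual Fq D) :=
      Module.finBasis Fq (Dual Fq D)
    let e4 : {ψ : Dual Fq D →ₗ[Fq] Dual Fq U // Function.Injective ψ}
        ≃ {s : Fin (Module.finrank Fq (Dual Fq D)) → Dual Fq U // LinearIndependent Fq s} :=
      ((Equiv.subtypeEquiv (bD.constr (M' := Dual Fq U) ℕ).toEquiv
        (fun s => by
          rw [LinearEquiv.coe_toEquiv]
          exact (injective_constr_iff bD s).symm)).symm)
    have hcard : Nat.card {c : Fin m → (Fin N → Fq) // Submodule.span Fq (Set.range c) = D}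
        = Nat.card {s : Fin (Module.finrank Fq (Dual Fq D)) → Dual Fq U //
            LinearIndependent Fq s} :=
      Nat.card_congr (((e1.trans e2).trans e3).trans e4)
    haveI : Finite (Dual Fq U) :=
      Finite.of_injective (fun f => (f : U → Fq)) DFunLike.coe_injective
    have hfr : Module.finrank Fq (Dual Fq U) = m := by
      rw [Subspace.dual_finrank_eq, Module.finrank_fintype_fun_eq_card, Fintype.card_fin]
    have hle : Module.finrank Fq (Dual Fq D) ≤ Module.finrank Fq (Dual Fq U) := by
      rw [hdr, hfr]; exact hrm
    have := card_linearIndependent (K := Fq) (V := Dual Fq U) hle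
    rw [hcard, this, hfr, hdr]
    rw [Fin.prod_univ_eq_prod_range (fun i => q ^ m - q ^ i) r]
    rw [Nat.cast_prod]
    refine Finset.prod_congr rfl fun i hi => ?_
    have him : i ≤ m := le_trans (Nat.le_of_lt (Finset.mem_range.mp hi)) hrm
    rw [Nat.cast_sub (Nat.pow_le_pow_right Fintype.card_pos him)]
    push_cast
    ring
  · -- r > m : both sides zero
    have hempty : IsEmpty {c : Fin m → (Fin N → Fq) // Submodule.span Fq (Set.range c) = D} := by
      constructor
      rintro ⟨c, hc⟩
      have h1 : Module.finrank Fq (Submodule.span Fq (Set.range c)) ≤ m := by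
        refine le_trans (finrank_span_le_card (Set.range c)) ?_
        rw [Set.toFinset_range]
        exact le_trans (Finset.card_image_le) (by simp)
      rw [hc] at h1
      omega
    rw [Nat.card_of_isEmpty]
    symm
    rw [Finset.prod_eq_zero (Finset.mem_range.mpr hrm)]
    · simp
    · rw [sub_self]

end Counting
section Grouping
variable {Fq : Type} [Field Fq] [Fintype Fq]

open Module

lemma effLen_eq_suppWt {N m : ℕ} (c : Fin m → (Fin N → Fq)) :
    effLen c = suppWt (Submodule.span Fq (Set.range c)) := by
  classical
  unfold effLen suppWt
  congr 1
  apply Finset.filter_congr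
  intro j _
  constructor
  · rintro ⟨i, hi⟩
    exact ⟨c i, Submodule.subset_span (Set.mem_range_self i), hi⟩
  · rintro ⟨v, hv, hvj⟩
    by_contra h
    push_neg at h
    have hle : Submodule.span Fq (Set.range c) ≤ LinearMap.ker (LinearMap.proj j
        (R := Fq) (φ := fun _ : Fin N => Fq)) := by
      rw [Submodule.span_le]
      rintro _ ⟨i, rfl⟩
      simp only [SetLike.mem_coe, LinearMap.mem_ker, LinearMap.proj_apply]
      exact h i
    exact hvj (hle hv)

lemma prod_ite_pow {N : ℕ} (P : Fin N → Prop) [DecidablePred P] (A B : ℂ) :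
    ∏ j, (if P j then A else B)
      = A ^ (N - (Finset.univ.filter fun j => ¬ P j).card)
        * B ^ (Finset.univ.filter fun j => ¬ P j).card := by
  rw [Finset.prod_ite]
  rw [Finset.prod_const, Finset.prod_const]
  have hcard : (Finset.univ.filter fun j => P j).card
      = N - (Finset.univ.filter fun j => ¬ P j).card := by
    have h : (Finset.univ.filter fun j => P j).card
        + (Finset.univ.filter fun j => ¬ P j).card = N := by
      rw [Finset.card_filter_add_card_filter_not]
      simp
    omega
  rw [hcard]

lemma effLen_card_not {N m : ℕ} (c : Fin m → (Fin N → Fq)) :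
    (Finset.univ.filter fun j => ¬ (∀ i, c i j = 0)).card = effLen c := by
  unfold effLen
  congr 1
  apply Finset.filter_congr
  intro j _
  push_neg
  rfl

lemma group_sum {N m : ℕ} (E : Submodule Fq (Fin N → Fq)) (K : ℕ)
    (hK : Module.finrank Fq E ≤ K) (X Y : ℂ) :
    Wm (fun _ : Fin m => E) X Y
      = ∑ r ∈ Finset.range (K + 1),
          (∏ i ∈ Finset.range r,
            ((Fintype.card Fq : ℂ) ^ m - (Fintype.card Fq : ℂ) ^ i)) * Wr E r X Y := by
  classical
  haveI : Finite (Submodule Fq (Fin N → Fq)) :=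
    Finite.of_injective _ (SetLike.coe_injective (A := Submodule Fq (Fin N → Fq)))
  haveI := Fintype.ofFinite (Submodule Fq (Fin N → Fq))
  set F : ℕ → ℂ := fun n => X ^ (N - n) * Y ^ n with hF
  set g : (∀ _ : Fin m, E) → Submodule Fq (Fin N → Fq) :=
    fun c => Submodule.span Fq (Set.range fun i => ((c i : Fin N → Fq))) with hg
  have hWm : Wm (fun _ : Fin m => E) X Y = ∑ c : (∀ _ : Fin m, E), F (suppWt (g c)) := by
    unfold Wm
    refine Finset.sum_congr rfl fun c _ => ?_
    rw [hF, hg]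
    rw [← effLen_eq_suppWt]
  set t : Finset (Submodule Fq (Fin N → Fq)) :=
    Finset.univ.filter (fun D => D ≤ E ∧ Module.finrank Fq D ≤ K) with ht
  have hmaps : ∀ c : (∀ _ : Fin m, E), g c ∈ t := by
    intro c
    rw [ht, Finset.mem_filter]
    refine ⟨Finset.mem_univ _, ?_, ?_⟩
    · rw [hg, Submodule.span_le]
      rintro _ ⟨i, rfl⟩
      exact (c i).2
    · refine le_trans ?_ hK
      exact Submodule.finrank_mono (by
        rw [hg, Submodule.span_le]
        rintro _ ⟨i, rfl⟩
        exact (c i).2)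
  have step1 : ∑ c : (∀ _ : Fin m, E), F (suppWt (g c))
      = ∑ D ∈ t, (Finset.univ.filter fun c : (∀ _ : Fin m, E) => g c = D).card
          * F (suppWt D) := by
    rw [← Finset.sum_fiberwise_of_maps_to (fun c _ => hmaps c) (fun c => F (suppWt (g c)))]
    refine Finset.sum_congr rfl fun D _ => ?_
    rw [Finset.sum_congr rfl (fun c hc => by
      rw [(Finset.mem_filter.mp hc).2]), Finset.sum_const, nsmul_eq_mul]
  have fibcard : ∀ D ∈ t, ((Finset.univ.filter fun c : (∀ _ : Fin m, E) => g c = D).card : ℂ)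
      = ∏ i ∈ Finset.range (Module.finrank Fq D),
          ((Fintype.card Fq : ℂ) ^ m - (Fintype.card Fq : ℂ) ^ i) := by
    intro D hD
    have hDE : D ≤ E := ((Finset.mem_filter.mp hD).2).1
    rw [← Fintype.card_subtype]
    rw [← Nat.card_eq_fintype_card]
    have hcongr : Nat.card {c : (∀ _ : Fin m, E) // g c = D}
        = Nat.card {c : Fin m → (Fin N → Fq) // Submodule.span Fq (Set.range c) = D} := by
      refine Nat.card_congr
        { toFun := fun c => ⟨fun i => ((c.1 i : Fin N → Fq)), c.2⟩
          invFun := fun c => ⟨fun i => ⟨c.1 i,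
              hDE (c.2.le (Submodule.subset_span (Set.mem_range_self i)))⟩, c.2⟩
          left_inv := fun c => rfl
          right_inv := fun c => rfl }
    rw [hcongr]
    exact count_surj D
  rw [hWm, step1]
  have hrank : ∀ D ∈ t, Module.finrank Fq D ∈ Finset.range (K + 1) := by
    intro D hD
    rw [Finset.mem_range, Nat.lt_succ_iff]
    exact ((Finset.mem_filter.mp hD).2).2
  rw [← Finset.sum_fiberwise_of_maps_to hrank
    (fun D => ((Finset.univ.filter fun c : (∀ _ : Fin m, E) => g c = D).card : ℂ)
      * F (suppWt D))]
  refine Finset.sum_congr rfl fun r hr => ?_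
  have inner : ∑ D ∈ t.filter (fun D : Submodule Fq (Fin N → Fq) => Module.finrank Fq D = r),
      ((Finset.univ.filter fun c : (∀ _ : Fin m, E) => g c = D).card : ℂ) * F (suppWt D)
      = (∏ i ∈ Finset.range r,
          ((Fintype.card Fq : ℂ) ^ m - (Fintype.card Fq : ℂ) ^ i))
        * ∑ D ∈ t.filter (fun D : Submodule Fq (Fin N → Fq) => Module.finrank Fq D = r), F (suppWt D) := by
    rw [Finset.mul_sum]
    refine Finset.sum_congr rfl fun D hD => ?_
    have hDm := Finset.mem_filter.mp hD
    rw [fibcard D hDm.1, hDm.2]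
  rw [inner]
  congr 1
  unfold Wr
  have hset : {D : Submodule Fq (Fin N → Fq) | D ≤ E ∧ Module.finrank Fq D = r}
      = ↑(t.filter (fun D : Submodule Fq (Fin N → Fq) => Module.finrank Fq D = r)) := by
    ext D
    simp only [ht, Finset.coe_filter, Finset.mem_filter, Finset.mem_univ, true_and,
      Set.mem_setOf_eq]
    constructor
    · rintro ⟨h1, h2⟩
      exact ⟨⟨h1, h2 ▸ (Nat.lt_succ_iff.mp (Finset.mem_range.mp hr))⟩, h2⟩
    · rintro ⟨⟨h1, _⟩, h2⟩
      exact ⟨h1, h2⟩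
  rw [hset, finsum_mem_coe_finset]

end Grouping
section DualDim
variable {Fq : Type} [Field Fq] [Fintype Fq]

open Module LinearMap

noncomputable def dotForm (N : ℕ) : LinearMap.BilinForm Fq (Fin N → Fq) :=
  LinearMap.mk₂ Fq (fun u v => ∑ j, u j * v j)
    (fun u u' v => by simp [add_mul, Finset.sum_add_distrib])
    (fun a u v => by simp [Finset.mul_sum, mul_assoc])
    (fun u v v' => by simp [mul_add, Finset.sum_add_distrib])
    (fun a u v => by
      simp only [smul_eq_mul, Pi.smul_apply, Finset.mul_sum]
      exact Finset.sum_congr rfl fun j _ => by ring)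

lemma dotForm_apply {N : ℕ} (u v : Fin N → Fq) : dotForm N u v = ∑ j, u j * v j := rfl

lemma dotForm_isRefl {N : ℕ} : (dotForm (Fq := Fq) N).IsRefl := by
  intro u v h
  rw [dotForm_apply] at h ⊢
  rw [← h]
  exact Finset.sum_congr rfl fun j _ => mul_comm _ _

lemma dotForm_nondegenerate {N : ℕ} : (dotForm (Fq := Fq) N).Nondegenerate := by
  refine (LinearMap.IsRefl.nondegenerate_iff_separatingLeft (B := dotForm (Fq := Fq) N)
    (fun u v h => dotForm_isRefl u v h)).mpr ?_
  intro v hv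
  funext j
  have := hv (Pi.single j 1)
  rw [dotForm_apply] at this
  classical
  simpa [Pi.single_apply, mul_ite, Finset.sum_ite_eq'] using this

lemma dualCode_eq_orthogonal {N : ℕ} (C : Submodule Fq (Fin N → Fq)) :
    dualCode C = (dotForm N).orthogonal C := by
  ext v
  constructor
  · intro hv u hu
    exact hv u hu
  · intro hv u hu
    exact hv u hu

lemma finrank_dualCode {N : ℕ} (C : Submodule Fq (Fin N → Fq)) :
    Module.finrank Fq (dualCode C) = N - Module.finrank Fq C := by
  rw [dualCode_eq_orthogonal]
  rw [LinearMap.BilinForm.finrank_orthogonal dotForm_nondegenerate C]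
  rw [Module.finrank_fintype_fun_eq_card, Fintype.card_fin]

end DualDim
section MacW
variable {Fq : Type} [Field Fq] [Fintype Fq]

lemma sum_prod_pi {ι : Type*} [Fintype ι] [DecidableEq ι] {κ : ι → Type*}
    [∀ i, Fintype (κ i)] (f : ∀ i, κ i → ℂ) :
    ∑ x : (∀ i, κ i), ∏ i, f i (x i) = ∏ i, ∑ j : κ i, f i j := by
  rw [Finset.prod_univ_sum]
  rw [Fintype.piFinset_univ]

lemma column_sum {m : ℕ} {ψ : AddChar Fq ℂ} (hψ : ψ ≠ 1) (b : Fin m → Fq) (X Y : ℂ) :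
    ∑ a : Fin m → Fq, (if a = 0 then X else Y) * ψ (∑ i, b i * a i)
      = if b = 0 then X + ((Fintype.card Fq : ℂ) ^ m - 1) * Y else X - Y := by
  classical
  have split : ∀ a : Fin m → Fq,
      (if a = 0 then X else Y) * ψ (∑ i, b i * a i)
        = (if a = 0 then (X - Y) * ψ (∑ i, b i * a i) else 0)
          + Y * ψ (∑ i, b i * a i) := by
    intro a
    by_cases h : a = 0 <;> simp [h] <;> ring
  rw [Finset.sum_congr rfl fun a _ => split a, Finset.sum_add_distrib, ← Finset.mul_sum]
  rw [Finset.sum_ite_eq' Finset.univ (0 : Fin m → Fq)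
    (fun a => (X - Y) * ψ (∑ i, b i * a i))]
  rw [char2 hψ b]
  simp only [Finset.mem_univ, if_true, Pi.zero_apply, mul_zero, Finset.sum_const_zero,
    AddChar.map_zero_eq_one, mul_one]
  by_cases hb : b = 0
  · rw [if_pos hb, if_pos hb]; ring
  · rw [if_neg hb, if_neg hb]; ring

lemma inner_d_sum {N m : ℕ} {ψ : AddChar Fq ℂ} (hψ : ψ ≠ 1)
    (c : Fin m → Fin N → Fq) (X Y : ℂ) :
    ∑ d : Fin m → Fin N → Fq,
        (∏ j, if ∀ i, d i j = 0 then X else Y) * ψ (∑ i, ∑ j, c i j * d i j)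
      = ∏ j, (if ∀ i, c i j = 0 then X + ((Fintype.card Fq : ℂ) ^ m - 1) * Y else X - Y) := by
  classical
  have hswap : ∑ d : Fin m → Fin N → Fq,
        (∏ j, if ∀ i, d i j = 0 then X else Y) * ψ (∑ i, ∑ j, c i j * d i j)
      = ∑ e : Fin N → Fin m → Fq,
        (∏ j, if ∀ i, e j i = 0 then X else Y) * ψ (∑ i, ∑ j, c i j * e j i) :=
    (Fintype.sum_bijective (Function.swap)
      ⟨fun a b h => funext fun j => funext fun i => congrFun (congrFun h i) j,
       fun d => ⟨Function.swap d, rfl⟩⟩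
      _ _ (fun e => rfl)).symm
  rw [hswap]
  have hterm : ∀ e : Fin N → Fin m → Fq,
      (∏ j, if ∀ i, e j i = 0 then X else Y) * ψ (∑ i, ∑ j, c i j * e j i)
        = ∏ j, ((if e j = 0 then X else Y) * ψ (∑ i, c i j * e j i)) := by
    intro e
    rw [Finset.prod_mul_distrib]
    congr 1
    · exact Finset.prod_congr rfl fun j _ => by simp [funext_iff]
    · rw [Finset.sum_comm]
      exact addChar_sum ψ Finset.univ _
  rw [Finset.sum_congr rfl fun e _ => hterm e]
  rw [sum_prod_pi (fun j (a : Fin m → Fq) => (if a = 0 then X else Y) * ψ (∑ i, c i j * a i))]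
  refine Finset.prod_congr rfl fun j _ => ?_
  rw [column_sum hψ (fun i => c i j) X Y]
  simp [funext_iff]

lemma inner_c_sum {N m : ℕ} {ψ : AddChar Fq ℂ} (hψ : ψ ≠ 1) (E : Submodule Fq (Fin N → Fq))
    (d : Fin m → Fin N → Fq) :
    ∑ c : (∀ _ : Fin m, E), ψ (∑ i, ∑ j, (c i : Fin N → Fq) j * d i j)
      = if (∀ i, d i ∈ dualCode E)
          then ((Fintype.card Fq : ℂ) ^ (Module.finrank Fq E * m)) else 0 := by
  classical
  have h1 : ∀ c : (∀ _ : Fin m, E), ψ (∑ i, ∑ j, (c i : Fin N → Fq) j * d i j)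
      = ∏ i, ψ (∑ j, (c i : Fin N → Fq) j * d i j) := fun c => addChar_sum ψ _ _
  rw [Finset.sum_congr rfl fun c _ => h1 c]
  rw [sum_prod_pi (fun i (u : E) => ψ (∑ j, (u : Fin N → Fq) j * d i j))]
  rw [Finset.prod_congr rfl fun i _ => char3 hψ E (d i)]
  by_cases hd : ∀ i, d i ∈ dualCode E
  · rw [if_pos hd]
    rw [Finset.prod_congr rfl fun i (_ : i ∈ Finset.univ) => if_pos (hd i), Finset.prod_const]
    rw [Module.card_eq_pow_finrank (K := Fq) (V := E)]
    rw [Finset.card_univ, Fintype.card_fin]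
    push_cast
    rw [← pow_mul]
  · rw [if_neg hd]
    push_neg at hd
    obtain ⟨i0, hi0⟩ := hd
    exact Finset.prod_eq_zero (Finset.mem_univ i0) (if_neg hi0)

lemma macwilliams {N m : ℕ} (C : Submodule Fq (Fin N → Fq)) (X Y : ℂ) :
    Wm (fun _ : Fin m => dualCode C) X Y
      = ((Fintype.card Fq : ℂ) ^ (Module.finrank Fq C * m))⁻¹ *
          Wm (fun _ : Fin m => C) (X + ((Fintype.card Fq : ℂ) ^ m - 1) * Y) (X - Y) := by
  classical
  obtain ⟨ψ, hψ1⟩ := (AddChar.exists_apply_ne_zero (a := (1 : Fq))).mpr one_ne_zero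
  have hψ : ψ ≠ 1 := fun h => hψ1 (by rw [h]; rfl)
  set S : ℂ := ∑ c : (∀ _ : Fin m, C), ∑ d : Fin m → Fin N → Fq,
      (∏ j, if ∀ i, d i j = 0 then X else Y) *
        ψ (∑ i, ∑ j, (c i : Fin N → Fq) j * d i j) with hS
  have comp1 : S = Wm (fun _ : Fin m => C)
      (X + ((Fintype.card Fq : ℂ) ^ m - 1) * Y) (X - Y) := by
    rw [hS]
    unfold Wm
    refine Finset.sum_congr rfl fun c _ => ?_
    rw [inner_d_sum hψ (fun i => (c i : Fin N → Fq)) X Y]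
    rw [prod_ite_pow (fun j => ∀ i, (c i : Fin N → Fq) j = 0)
      (X + ((Fintype.card Fq : ℂ) ^ m - 1) * Y) (X - Y)]
    rw [effLen_card_not (fun i => (c i : Fin N → Fq))]
  have comp2 : S = (Fintype.card Fq : ℂ) ^ (Module.finrank Fq C * m) *
      Wm (fun _ : Fin m => dualCode C) X Y := by
    rw [hS, Finset.sum_comm]
    have h1 : ∀ d : Fin m → Fin N → Fq,
        ∑ c : (∀ _ : Fin m, C), (∏ j, if ∀ i, d i j = 0 then X else Y) *
          ψ (∑ i, ∑ j, (c i : Fin N → Fq) j * d i j)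
        = if (∀ i, d i ∈ dualCode C)
            then (Fintype.card Fq : ℂ) ^ (Module.finrank Fq C * m) *
              (∏ j, if ∀ i, d i j = 0 then X else Y)
            else 0 := by
      intro d
      rw [← Finset.mul_sum, inner_c_sum hψ C d]
      by_cases h : ∀ i, d i ∈ dualCode C <;> simp [h, mul_comm]
    rw [Finset.sum_congr rfl fun d _ => h1 d]
    rw [← Finset.sum_filter]
    rw [← Finset.mul_sum]
    congr 1
    unfold Wm
    refine Finset.sum_nbij'
      (i := fun d => fun i : Fin m =>
        if h : d i ∈ dualCode C then (⟨d i, h⟩ : dualCode C) else 0)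
      (j := fun c : (∀ _ : Fin m, dualCode C) => fun i : Fin m => (c i : Fin N → Fq))
      (fun d _ => Finset.mem_univ _)
      (fun c _ => Finset.mem_filter.mpr ⟨Finset.mem_univ _, fun i => (c i).2⟩)
      (fun d hd => by
        have hmem := (Finset.mem_filter.mp hd).2
        funext i
        simp [dif_pos (hmem i)])
      (fun c _ => by
        funext i
        simp)
      (fun d hd => by
        have hmem := (Finset.mem_filter.mp hd).2
        have hco : (fun i : Fin m =>
            ((if h : d i ∈ dualCode C then (⟨d i, h⟩ : dualCode C) else 0 : dualCode C)
              : Fin N → Fq)) = d := funext fun i => by simp [dif_pos (hmem i)]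
        rw [prod_ite_pow (fun j => ∀ i, d i j = 0) X Y, effLen_card_not d]
        rw [hco])
  have hq : ((Fintype.card Fq : ℂ)) ^ (Module.finrank Fq C * m) ≠ 0 :=
    pow_ne_zero _ (Nat.cast_ne_zero.mpr Fintype.card_ne_zero)
  rw [eq_inv_mul_iff_mul_eq₀ hq, ← comp2, comp1]
theorem klove_identity {N k m : ℕ} (hm : 1 ≤ m) (C : Submodule Fq (Fin N → Fq))
    (hC : Module.finrank Fq C = k) (X Y : ℂ) :
    ∑ r ∈ Finset.range (N - k + 1),
        (∏ i ∈ Finset.range r,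
            ((Fintype.card Fq : ℂ) ^ m - (Fintype.card Fq : ℂ) ^ i)) * Wr (dualCode C) r X Y
      = ((Fintype.card Fq : ℂ) ^ (k * m))⁻¹ *
          ∑ r ∈ Finset.range (k + 1),
            (∏ i ∈ Finset.range r,
                ((Fintype.card Fq : ℂ) ^ m - (Fintype.card Fq : ℂ) ^ i)) *
              Wr C r (X + ((Fintype.card Fq : ℂ) ^ m - 1) * Y) (X - Y) := by
  have hdual : Module.finrank Fq (dualCode C) ≤ N - k := by
    rw [finrank_dualCode, hC]
  rw [← group_sum (m := m) (dualCode C) (N - k) hdual X Y]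
  rw [← group_sum (m := m) C k (le_of_eq hC)
    (X + ((Fintype.card Fq : ℂ) ^ m - 1) * Y) (X - Y)]
  have h := macwilliams (m := m) C X Y
  rw [hC] at h
  exact h
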